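/- arXiv:1804.06071 — 4 statements merged into one kernel-verified Lean document; each statement's English description precedes it below -/
import Mathlib

section
/- The number of permutations of [n] avoiding both 132 and 312 is 2^{n-1}, for every n ≥ 1. -/
/-- An occurrence of the pattern `σ` in `π` is a strictly increasing choice of
indices whose images under `π` are order-isomorphic to `σ`. -/
def IsOccurrence {m n : ℕ} (σ : Equiv.Perm (Fin m)) (π : Equiv.Perm (Fin n))
    (f : Fin m → Fin n) : Prop :=
  StrictMono f ∧ ∀ j k : Fin m, π (f j) < π (f k) ↔ σ j < σ k

/-- `numOcc σ π` is the number of occurrences of the pattern `σ` in `π`. -/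
noncomputable def numOcc {m n : ℕ} (σ : Equiv.Perm (Fin m)) (π : Equiv.Perm (Fin n)) : ℕ :=
  Nat.card {f : Fin m → Fin n // IsOccurrence σ π f}

def p123 : Equiv.Perm (Fin 3) := 1
def p132 : Equiv.Perm (Fin 3) := Equiv.swap 1 2
def p213 : Equiv.Perm (Fin 3) := Equiv.swap 0 1
def p321 : Equiv.Perm (Fin 3) := Equiv.swap 0 2
def p231 : Equiv.Perm (Fin 3) := finRotate 3
def p312 : Equiv.Perm (Fin 3) := (finRotate 3)⁻¹

theorem Equiv.Perm.apply_inv_self {α : Type*} (f : Equiv.Perm α) (x : α) : f (f⁻¹ x) = x :=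
  f.apply_symm_apply x

theorem Equiv.Perm.inv_apply_self {α : Type*} (f : Equiv.Perm α) (x : α) : f⁻¹ (f x) = x :=
  f.symm_apply_apply x

theorem Equiv.apply_inv_self {α : Type*} (f : Equiv.Perm α) (x : α) : f (f⁻¹ x) = x :=
  f.apply_symm_apply x

def MinMax {n : ℕ} (π : Equiv.Perm (Fin n)) : Prop :=
  ∀ k : Fin n, (∀ j, j < k → π j < π k) ∨ (∀ j, j < k → π k < π j)

lemma numOcc_eq_zero_iff {m n : ℕ} (σ : Equiv.Perm (Fin m)) (π : Equiv.Perm (Fin n)) :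
    numOcc σ π = 0 ↔ ∀ f, ¬ IsOccurrence σ π f := by
  rw [numOcc, Nat.card_eq_zero]
  constructor
  · rintro (h | h)
    · intro f hf; exact h.false ⟨f, hf⟩
    · exact absurd h (not_infinite_iff_finite.mpr (Subtype.finite))
  · intro h; left; exact ⟨fun ⟨f, hf⟩ => h f hf⟩

-- p132 values: 0 ↦ 0, 1 ↦ 2, 2 ↦ 1
example : p132 0 = 0 ∧ p132 1 = 2 ∧ p132 2 = 1 := by decide
example : p312 0 = 2 ∧ p312 1 = 0 ∧ p312 2 = 1 := by decide

lemma strictMono_vec3 {n : ℕ} {a b c : Fin n} (hab : a < b) (hbc : b < c) :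
    StrictMono ![a, b, c] := by
  intro x y hxy
  fin_cases x <;> fin_cases y <;>
    simp_all [Matrix.cons_val_zero, Matrix.cons_val_one] <;>
    first
      | exact hab | exact hbc | exact hab.trans hbc
      | exact absurd hxy (by decide)

lemma occ132 {n : ℕ} (π : Equiv.Perm (Fin n)) {a b c : Fin n} (hab : a < b) (hbc : b < c)
    (h1 : π a < π c) (h2 : π c < π b) : IsOccurrence p132 π ![a, b, c] := by
  have e0 : p132 0 = 0 := by decide
  have e1 : p132 1 = 2 := by decide
  have e2 : p132 2 = 1 := by decide
  refine ⟨strictMono_vec3 hab hbc, ?_⟩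
  intro j k
  fin_cases j <;> fin_cases k <;>
    simp (config := { decide := true }) [e0, e1, e2] <;>
    first
      | exact h1.trans h2
      | exact h2 | exact h1
      | exact (h1.trans h2).le
      | exact h1.le
      | exact h2.le

lemma occ312 {n : ℕ} (π : Equiv.Perm (Fin n)) {a b c : Fin n} (hab : a < b) (hbc : b < c)
    (h1 : π b < π c) (h2 : π c < π a) : IsOccurrence p312 π ![a, b, c] := by
  have e0 : p312 0 = 2 := by decide
  have e1 : p312 1 = 0 := by decide
  have e2 : p312 2 = 1 := by decide
  refine ⟨strictMono_vec3 hab hbc, ?_⟩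
  intro j k
  fin_cases j <;> fin_cases k <;>
    simp (config := { decide := true }) [e0, e1, e2] <;>
    first
      | exact h1.trans h2
      | exact h2 | exact h1
      | exact (h1.trans h2).le
      | exact h1.le
      | exact h2.le

lemma avoid_iff_minMax {n : ℕ} (π : Equiv.Perm (Fin n)) :
    (numOcc p132 π = 0 ∧ numOcc p312 π = 0) ↔ MinMax π := by
  rw [numOcc_eq_zero_iff, numOcc_eq_zero_iff]
  constructor
  · rintro ⟨h132, h312⟩ k
    by_contra hcon
    push_neg at hcon
    obtain ⟨⟨a, ha, hka⟩, ⟨b, hb, hkb⟩⟩ := hcon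
    have hka' : π k < π a := lt_of_le_of_ne hka (fun h => ha.ne (π.injective h.symm))
    have hkb' : π b < π k := lt_of_le_of_ne hkb (fun h => hb.ne (π.injective h))
    rcases lt_trichotomy a b with hab | hab | hab
    · exact h312 _ (occ312 π hab hb hkb' hka')
    · exact absurd (hab ▸ hka') (not_lt.2 hkb'.le)
    · exact h132 _ (occ132 π hab ha hkb' hka')
  · intro hmm
    constructor
    · rintro f ⟨hmono, hiff⟩
      have h02 : π (f 0) < π (f 2) := (hiff 0 2).2 (by decide)
      have h21 : π (f 2) < π (f 1) := (hiff 2 1).2 (by decide)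
      rcases hmm (f 2) with h | h
      · exact absurd (h (f 1) (hmono (by decide))) (not_lt.2 h21.le)
      · exact absurd (h (f 0) (hmono (by decide))) (not_lt.2 h02.le)
    · rintro f ⟨hmono, hiff⟩
      have h12 : π (f 1) < π (f 2) := (hiff 1 2).2 (by decide)
      have h20 : π (f 2) < π (f 0) := (hiff 2 0).2 (by decide)
      rcases hmm (f 2) with h | h
      · exact absurd (h (f 0) (hmono (by decide))) (not_lt.2 h20.le)
      · exact absurd (h (f 1) (hmono (by decide))) (not_lt.2 h12.le)

def extTop {n : ℕ} (π : Equiv.Perm (Fin n)) : Equiv.Perm (Fin (n + 1)) :=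
  Equiv.permCongr finSumFinEquiv (Equiv.sumCongr π (Equiv.refl (Fin 1)))

lemma extTop_castSucc {n : ℕ} (π : Equiv.Perm (Fin n)) (i : Fin n) :
    extTop π i.castSucc = (π i).castSucc := by
  have h : i.castSucc = finSumFinEquiv (Sum.inl i) := by
    simp [finSumFinEquiv_apply_left]; rfl
  simp [extTop, Equiv.permCongr_apply, h, finSumFinEquiv_apply_left]; rfl

lemma extTop_last {n : ℕ} (π : Equiv.Perm (Fin n)) :
    extTop π (Fin.last n) = Fin.last n := by
  have h : Fin.last n = finSumFinEquiv (Sum.inr (0 : Fin 1)) := by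
    simp [finSumFinEquiv_apply_right]; ext; simp
  simp [extTop, Equiv.permCongr_apply, h, finSumFinEquiv_apply_right]

def extBot {n : ℕ} (π : Equiv.Perm (Fin n)) : Equiv.Perm (Fin (n + 1)) :=
  (extTop π).trans (finRotate (n + 1))

lemma extBot_castSucc {n : ℕ} (π : Equiv.Perm (Fin n)) (i : Fin n) :
    extBot π i.castSucc = (π i).succ := by
  simp [extBot, Equiv.trans_apply, extTop_castSucc, finRotate_succ_apply,
    Fin.coeSucc_eq_succ]

lemma extBot_last {n : ℕ} (π : Equiv.Perm (Fin n)) :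
    extBot π (Fin.last n) = 0 := by
  simp [extBot, Equiv.trans_apply, extTop_last, finRotate_last]

lemma lt_of_ne_last {n : ℕ} {x : Fin (n + 1)} (h : x ≠ Fin.last n) : (x : ℕ) < n :=
  lt_of_le_of_ne (Nat.lt_succ_iff.1 x.isLt) (fun hv => h (Fin.ext hv))

lemma minMax_extTop {n : ℕ} {π : Equiv.Perm (Fin n)} (h : MinMax π) :
    MinMax (extTop π) := by
  intro k
  induction k using Fin.lastCases with
  | last =>
    left
    intro j hj
    have hj' : j ≠ Fin.last n := hj.ne
    rw [← Fin.castSucc_castPred j hj']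
    rw [extTop_castSucc, extTop_last]
    exact Fin.castSucc_lt_last _
  | cast k =>
    rcases h k with hk | hk
    · left
      intro j hj
      have hj' : j ≠ Fin.last n := ne_of_lt (hj.trans (Fin.castSucc_lt_last _))
      rw [← Fin.castSucc_castPred j hj'] at hj ⊢
      rw [extTop_castSucc, extTop_castSucc, Fin.castSucc_lt_castSucc_iff] at *
      exact hk _ hj
    · right
      intro j hj
      have hj' : j ≠ Fin.last n := ne_of_lt (hj.trans (Fin.castSucc_lt_last _))
      rw [← Fin.castSucc_castPred j hj'] at hj ⊢
      rw [extTop_castSucc, extTop_castSucc, Fin.castSucc_lt_castSucc_iff] at *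
      exact hk _ hj

lemma minMax_extBot {n : ℕ} {π : Equiv.Perm (Fin n)} (h : MinMax π) :
    MinMax (extBot π) := by
  intro k
  induction k using Fin.lastCases with
  | last =>
    right
    intro j hj
    have hj' : j ≠ Fin.last n := hj.ne
    rw [← Fin.castSucc_castPred j hj']
    rw [extBot_castSucc, extBot_last]
    exact Fin.succ_pos _
  | cast k =>
    rcases h k with hk | hk
    · left
      intro j hj
      have hj' : j ≠ Fin.last n := ne_of_lt (hj.trans (Fin.castSucc_lt_last _))
      rw [← Fin.castSucc_castPred j hj'] at hj ⊢
      rw [extBot_castSucc, extBot_castSucc, Fin.succ_lt_succ_iff]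
      rw [Fin.castSucc_lt_castSucc_iff] at hj
      exact hk _ hj
    · right
      intro j hj
      have hj' : j ≠ Fin.last n := ne_of_lt (hj.trans (Fin.castSucc_lt_last _))
      rw [← Fin.castSucc_castPred j hj'] at hj ⊢
      rw [extBot_castSucc, extBot_castSucc, Fin.succ_lt_succ_iff]
      rw [Fin.castSucc_lt_castSucc_iff] at hj
      exact hk _ hj

lemma minMax_last {n : ℕ} {π : Equiv.Perm (Fin (n + 1))} (h : MinMax π) :
    π (Fin.last n) = Fin.last n ∨ π (Fin.last n) = 0 := by
  rcases h (Fin.last n) with hk | hk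
  · left
    by_contra hne
    have hj : π⁻¹ (Fin.last n) ≠ Fin.last n := by
      intro he
      exact hne ((congrArg π he).symm.trans (π.apply_inv_self _))
    have hlt : π⁻¹ (Fin.last n) < Fin.last n := Fin.lt_last_iff_ne_last.2 hj
    have := hk _ hlt
    rw [Equiv.Perm.apply_inv_self] at this
    exact absurd (this.trans (Fin.lt_last_iff_ne_last.2 hne)) (lt_irrefl _)
  · right
    by_contra hne
    have hj : π⁻¹ 0 ≠ Fin.last n := by
      intro he
      exact hne ((congrArg π he.symm).trans (π.apply_inv_self _))
    have hlt : π⁻¹ 0 < Fin.last n := Fin.lt_last_iff_ne_last.2 hj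
    have := hk _ hlt
    rw [Equiv.Perm.apply_inv_self] at this
    exact absurd this (Fin.not_lt_zero _)

lemma restrict_top {n : ℕ} {π : Equiv.Perm (Fin (n + 1))} (h : MinMax π)
    (hl : π (Fin.last n) = Fin.last n) :
    ∃ ρ : Equiv.Perm (Fin n), MinMax ρ ∧ extTop ρ = π := by
  have hne : ∀ i : Fin n, π i.castSucc ≠ Fin.last n := by
    intro i he
    have := π.injective (he.trans hl.symm)
    exact absurd this (Fin.castSucc_lt_last i).ne
  have hne' : ∀ i : Fin n, π⁻¹ i.castSucc ≠ Fin.last n := by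
    intro i he
    have : i.castSucc = Fin.last n := by
      rw [← π.apply_inv_self i.castSucc, he, hl]
    exact absurd this (Fin.castSucc_lt_last i).ne
  refine ⟨⟨fun i => (π i.castSucc).castLT (lt_of_ne_last (hne i)),
           fun i => (π⁻¹ i.castSucc).castLT (lt_of_ne_last (hne' i)), ?_, ?_⟩, ?_, ?_⟩
  · intro i
    simp only [Fin.castSucc_castLT, Equiv.Perm.inv_apply_self, Fin.castLT_castSucc]
  · intro i
    simp only [Fin.castSucc_castLT, Equiv.Perm.apply_inv_self, Fin.castLT_castSucc]
  · intro k
    rcases h k.castSucc with hk | hk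
    · left
      intro j hj
      have := hk j.castSucc (Fin.castSucc_lt_castSucc_iff.2 hj)
      simp only [Equiv.coe_fn_mk, Fin.lt_def, Fin.coe_castLT]
      exact this
    · right
      intro j hj
      have := hk j.castSucc (Fin.castSucc_lt_castSucc_iff.2 hj)
      simp only [Equiv.coe_fn_mk, Fin.lt_def, Fin.coe_castLT]
      exact this
  · ext x
    induction x using Fin.lastCases with
    | last => rw [extTop_last, hl]
    | cast i =>
      rw [extTop_castSucc]
      simp only [Equiv.coe_fn_mk]
      rw [Fin.castSucc_castLT]

lemma fr_symm {n : ℕ} (x : Fin (n + 1)) : (finRotate (n + 1))⁻¹ x = x - 1 := by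
  apply (finRotate (n + 1)).injective
  rw [Equiv.Perm.apply_inv_self, finRotate_succ_apply]
  exact (sub_add_cancel x 1).symm

lemma sub_one_lt_sub_one_iff {n : ℕ} {x y : Fin (n + 1)} (hx : x ≠ 0) (hy : y ≠ 0) :
    x - 1 < y - 1 ↔ x < y := by
  have hx' : (x : ℕ) ≠ 0 := fun h => hx (Fin.ext h)
  have hy' : (y : ℕ) ≠ 0 := fun h => hy (Fin.ext h)
  rw [Fin.lt_def, Fin.lt_def, Fin.coe_sub_one, Fin.coe_sub_one, if_neg hx, if_neg hy]
  omega

lemma rotate_bot {n : ℕ} {π : Equiv.Perm (Fin (n + 1))} (h : MinMax π)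
    (hl : π (Fin.last n) = 0) :
    MinMax (π.trans (finRotate (n + 1))⁻¹) ∧
      (π.trans (finRotate (n + 1))⁻¹) (Fin.last n) = Fin.last n := by
  set τ := π.trans (finRotate (n + 1))⁻¹ with hτ
  have happ : ∀ x, τ x = π x - 1 := fun x => fr_symm (π x)
  have hne0 : ∀ x : Fin (n + 1), x ≠ Fin.last n → π x ≠ 0 := by
    intro x hx he
    exact hx (π.injective (he.trans hl.symm))
  have hlast : τ (Fin.last n) = Fin.last n := by
    rw [happ, hl]
    apply Fin.ext
    rw [Fin.coe_sub_one, if_pos rfl]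
    rfl
  refine ⟨?_, hlast⟩
  intro k
  induction k using Fin.lastCases with
  | last =>
    left
    intro j hj
    rw [hlast]
    apply Fin.lt_last_iff_ne_last.2
    intro he
    exact hj.ne (τ.injective (he.trans hlast.symm))
  | cast k =>
    have hkne : π k.castSucc ≠ 0 := hne0 _ (Fin.castSucc_lt_last k).ne
    rcases h k.castSucc with hk | hk
    · left
      intro j hj
      have hjne : π j ≠ 0 := hne0 _ (ne_of_lt (hj.trans (Fin.castSucc_lt_last _)))
      rw [happ, happ]
      exact (sub_one_lt_sub_one_iff hjne hkne).2 (hk j hj)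
    · right
      intro j hj
      have hjne : π j ≠ 0 := hne0 _ (ne_of_lt (hj.trans (Fin.castSucc_lt_last _)))
      rw [happ, happ]
      exact (sub_one_lt_sub_one_iff hkne hjne).2 (hk j hj)

lemma card_step (n : ℕ) (hn : 1 ≤ n) :
    Nat.card {π : Equiv.Perm (Fin (n + 1)) // MinMax π} =
      2 * Nat.card {π : Equiv.Perm (Fin n) // MinMax π} := by
  have hlast0 : (Fin.last n : Fin (n + 1)) ≠ 0 := by
    intro he
    have : n = 0 := by simpa [Fin.ext_iff] using he
    omega
  have hF : Function.Bijective
      (fun p : Bool × {π : Equiv.Perm (Fin n) // MinMax π} =>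
        (⟨if p.1 then extTop p.2.1 else extBot p.2.1, by
            rcases p with ⟨b, π, hπ⟩; cases b
            · exact minMax_extBot hπ
            · exact minMax_extTop hπ⟩ :
          {π : Equiv.Perm (Fin (n + 1)) // MinMax π})) := by
    constructor
    · rintro ⟨b, π, hπ⟩ ⟨c, ρ, hρ⟩ heq
      simp only [Subtype.mk.injEq] at heq
      have hbc : b = c := by
        cases b <;> cases c <;> simp only [reduceIte, Bool.false_eq_true, if_false, if_true] at heq <;> try rfl
        · have := congrArg (fun σ : Equiv.Perm (Fin (n+1)) => σ (Fin.last n)) heq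
          simp only [extBot_last, extTop_last] at this
          exact absurd this.symm hlast0
        · have := congrArg (fun σ : Equiv.Perm (Fin (n+1)) => σ (Fin.last n)) heq
          simp only [extBot_last, extTop_last] at this
          exact absurd this hlast0
      subst hbc
      have hπρ : π = ρ := by
        cases b <;> simp only [reduceIte, Bool.false_eq_true, if_false, if_true] at heq <;>
        · apply Equiv.ext
          intro i
          have := congrArg (fun σ : Equiv.Perm (Fin (n+1)) => σ i.castSucc) heq
          simp only [extTop_castSucc, extBot_castSucc] at this
          first
            | exact Fin.succ_injective _ this
            | exact Fin.castSucc_injective _ this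
      simp [hπρ]
    · rintro ⟨π, hπ⟩
      rcases minMax_last hπ with hl | hl
      · obtain ⟨ρ, hρ, heq⟩ := restrict_top hπ hl
        exact ⟨(true, ⟨ρ, hρ⟩), Subtype.ext (by simpa using heq)⟩
      · obtain ⟨hτ, hτl⟩ := rotate_bot hπ hl
        obtain ⟨ρ, hρ, heq⟩ := restrict_top hτ hτl
        refine ⟨(false, ⟨ρ, hρ⟩), Subtype.ext ?_⟩
        simp only [if_neg Bool.false_ne_true]
        apply Equiv.ext
        intro x
        have := congrArg (fun σ : Equiv.Perm (Fin (n+1)) => σ x) heq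
        simp only [Equiv.trans_apply] at this
        simp only [extBot, Equiv.trans_apply, this, Equiv.Perm.apply_inv_self]
  rw [← Nat.card_eq_of_bijective _ hF, Nat.card_prod, Nat.card_eq_fintype_card (α := Bool),
    Fintype.card_bool]

lemma card_base : Nat.card {π : Equiv.Perm (Fin 1) // MinMax π} = 1 := by
  have hall : ∀ π : Equiv.Perm (Fin 1), MinMax π := by
    intro π k
    left
    intro j hj
    exact absurd hj (by omega)
  rw [Nat.card_congr (Equiv.subtypeUnivEquiv hall), Nat.card_eq_fintype_card]
  simp

theorem card_avoid_132_312 (n : ℕ) (hn : 1 ≤ n) :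
    Nat.card {π : Equiv.Perm (Fin n) // numOcc p132 π = 0 ∧ numOcc p312 π = 0} =
      2 ^ (n - 1) := by
  rw [Nat.card_congr (Equiv.subtypeEquivRight fun π => avoid_iff_minMax π)]
  obtain ⟨m, rfl⟩ : ∃ m, n = m + 1 := ⟨n - 1, (Nat.succ_pred_eq_of_pos hn).symm⟩
  simp only [Nat.add_sub_cancel]
  clear hn
  induction m with
  | zero => exact card_base
  | succ k ih =>
    rw [card_step (k + 1) (Nat.succ_le_succ (Nat.zero_le k)), ih, pow_succ]
    ring
end

section
/- A permutation π avoids both 231 and 312 if and only if every block in its decomposition into indecomposable permutations is a decreasing permutation, i.e., of the form ℓ(ℓ−1)⋯21 for some ℓ ≥ 1. -/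
/-- The composition (direct sum) `σ * τ` of two permutations. -/
def permComp {m n : ℕ} (σ : Equiv.Perm (Fin m)) (τ : Equiv.Perm (Fin n)) :
    Equiv.Perm (Fin (m + n)) :=
  Equiv.permCongr finSumFinEquiv (Equiv.sumCongr σ τ)

/-- Permutations of arbitrary (finite) length. -/
def SPerm := Σ n : ℕ, Equiv.Perm (Fin n)

def SPerm.comp (p q : SPerm) : SPerm := ⟨p.1 + q.1, permComp p.2 q.2⟩


/-! ### Auxiliary machinery -/

/-- Value of `π` at natural index `i` (junk value `0` out of range). -/
def pval {n : ℕ} (π : Equiv.Perm (Fin n)) (i : ℕ) : ℕ :=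
  if h : i < n then (π ⟨i, h⟩).val else 0

lemma pval_mk {n : ℕ} (π : Equiv.Perm (Fin n)) (i : ℕ) (h : i < n) :
    pval π i = (π ⟨i, h⟩).val := by rw [pval, dif_pos h]

lemma pval_fin {n : ℕ} (π : Equiv.Perm (Fin n)) (x : Fin n) :
    pval π x.val = (π x).val := by rw [pval_mk π x.val x.isLt]

lemma pval_lt {n : ℕ} (π : Equiv.Perm (Fin n)) {i : ℕ} (h : i < n) : pval π i < n := by
  rw [pval_mk π i h]; exact (π _).isLt

lemma pval_inj {n : ℕ} (π : Equiv.Perm (Fin n)) {i j : ℕ} (hi : i < n) (hj : j < n)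
    (h : pval π i = pval π j) : i = j := by
  rw [pval_mk π i hi, pval_mk π j hj] at h
  have := π.injective (Fin.ext h)
  exact congrArg Fin.val this

lemma pval_surj {n : ℕ} (π : Equiv.Perm (Fin n)) {v : ℕ} (hv : v < n) :
    ∃ i, i < n ∧ pval π i = v :=
  ⟨(π.symm ⟨v, hv⟩).val, (π.symm _).isLt, by rw [pval_fin, Equiv.apply_symm_apply]⟩

lemma pval_pval_symm {n : ℕ} (π : Equiv.Perm (Fin n)) {v : ℕ} (hv : v < n) :
    pval π (pval π.symm v) = v := by
  rw [pval_mk π.symm v hv, pval_fin, Equiv.apply_symm_apply]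

lemma pval_symm_pval {n : ℕ} (π : Equiv.Perm (Fin n)) {v : ℕ} (hv : v < n) :
    pval π.symm (pval π v) = v := by
  rw [pval_mk π v hv, pval_fin, Equiv.symm_apply_apply]

/-- The key structural condition: consecutive values drop by at most one. -/
def Cond {n : ℕ} (π : Equiv.Perm (Fin n)) : Prop :=
  ∀ i : ℕ, i + 1 < n → pval π i ≤ pval π (i + 1) + 1

lemma permComp_val {m n : ℕ} (σ : Equiv.Perm (Fin m)) (τ : Equiv.Perm (Fin n)) (x : Fin (m+n)) :
    (permComp σ τ x).val = if h : x.val < m then (σ ⟨x.val, h⟩).val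
      else m + (τ ⟨x.val - m, by omega⟩).val := by
  by_cases h : x.val < m
  · have h1 : finSumFinEquiv.symm x = Sum.inl ⟨x.val, h⟩ := by
      conv_lhs => rw [show x = Fin.castAdd n ⟨x.val, h⟩ from rfl]
      exact finSumFinEquiv_symm_apply_castAdd _
    simp only [permComp, Equiv.permCongr_apply, Equiv.sumCongr_apply, h1, Sum.map_inl,
      finSumFinEquiv_apply_left, dif_pos h, Fin.coe_castAdd]
  · have h1 : finSumFinEquiv.symm x = Sum.inr ⟨x.val - m, by omega⟩ := by
      conv_lhs => rw [show x = Fin.natAdd m ⟨x.val - m, by omega⟩ from Fin.ext (by simp; omega)]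
      exact finSumFinEquiv_symm_apply_natAdd _
    simp only [permComp, Equiv.permCongr_apply, Equiv.sumCongr_apply, h1, Sum.map_inr,
      finSumFinEquiv_apply_right, dif_neg h, Fin.coe_natAdd]

lemma pval_permComp {m k : ℕ} (σ : Equiv.Perm (Fin m)) (τ : Equiv.Perm (Fin k))
    (i : ℕ) (hi : i < m + k) :
    pval (permComp σ τ) i = if i < m then pval σ i else m + pval τ (i - m) := by
  rw [pval_mk _ i hi, permComp_val]
  by_cases h : i < m
  · rw [dif_pos h, if_pos h, pval_mk σ i h]
  · rw [dif_neg h, if_neg h, pval_mk τ (i - m) (by omega)]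

lemma occ_of_three {n : ℕ} (σ : Equiv.Perm (Fin 3)) (π : Equiv.Perm (Fin n)) (a b c : Fin n)
    (hab : a < b) (hbc : b < c)
    (h01 : ((π a).val < (π b).val ↔ σ 0 < σ 1))
    (h02 : ((π a).val < (π c).val ↔ σ 0 < σ 2))
    (h12 : ((π b).val < (π c).val ↔ σ 1 < σ 2)) :
    IsOccurrence σ π ![a, b, c] := by
  refine ⟨strictMono_vec3 hab hbc, ?_⟩
  have d01 : (π a).val ≠ (π b).val := fun h => (ne_of_lt hab) (π.injective (Fin.ext h))
  have d02 : (π a).val ≠ (π c).val :=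
    fun h => (ne_of_lt (lt_trans hab hbc)) (π.injective (Fin.ext h))
  have d12 : (π b).val ≠ (π c).val := fun h => (ne_of_lt hbc) (π.injective (Fin.ext h))
  have s01 : (σ 0).val ≠ (σ 1).val :=
    fun h => (by decide : (0:Fin 3) ≠ 1) (σ.injective (Fin.ext h))
  have s02 : (σ 0).val ≠ (σ 2).val :=
    fun h => (by decide : (0:Fin 3) ≠ 2) (σ.injective (Fin.ext h))
  have s12 : (σ 1).val ≠ (σ 2).val :=
    fun h => (by decide : (1:Fin 3) ≠ 2) (σ.injective (Fin.ext h))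
  rw [Fin.lt_def] at h01 h02 h12
  intro j k
  fin_cases j <;> fin_cases k <;>
    simp only [Fin.zero_eta, Fin.mk_one, show (⟨2, by omega⟩ : Fin 3) = 2 from rfl,
      Fin.lt_def, Matrix.cons_val_zero, Matrix.cons_val_one, Matrix.head_cons,
      Matrix.cons_val_two, Matrix.tail_cons, Fin.isValue] <;>
    omega

/-- Discrete downward intermediate value property under `Cond`. -/
lemma ivt {n : ℕ} {π : Equiv.Perm (Fin n)} (hC : Cond π) (d : ℕ) :
    ∀ i j : ℕ, j - i = d → i ≤ j → j < n → ∀ v : ℕ, v ≤ pval π i → pval π j ≤ v →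
    ∃ m : ℕ, i ≤ m ∧ m ≤ j ∧ m < n ∧ pval π m = v := by
  induction d with
  | zero =>
    intro i j hd hij hjn v h1 h2
    obtain rfl : i = j := by omega
    exact ⟨i, le_refl _, le_refl _, by omega, by omega⟩
  | succ d ih =>
    intro i j hd hij hjn v h1 h2
    by_cases hv : v ≤ pval π (i + 1)
    · obtain ⟨m, hm1, hm2, hm3, hm4⟩ := ih (i + 1) j (by omega) (by omega) hjn v hv h2
      exact ⟨m, by omega, hm2, hm3, hm4⟩
    · push_neg at hv
      have hc := hC i (by omega)
      exact ⟨i, le_refl _, hij, by omega, by omega⟩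

/-- An avoider of 231 and 312 satisfies `Cond`. -/
lemma cond_of_avoids {n : ℕ} {π : Equiv.Perm (Fin n)}
    (h1 : numOcc p231 π = 0) (h2 : numOcc p312 π = 0) : Cond π := by
  intro i h
  by_contra hc
  push_neg at hc
  have hin : i < n := by omega
  have hvn : pval π (i + 1) + 1 < n := lt_trans hc (pval_lt π hin)
  obtain ⟨m, hmn, hmv⟩ := pval_surj π hvn
  have hmi : m ≠ i := by intro he; rw [he] at hmv; omega
  have hmi1 : m ≠ i + 1 := by intro he; rw [he] at hmv; omega
  rcases Nat.lt_or_ge m i with hlt | hge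
  · -- pattern 231 at (m, i, i+1)
    rw [numOcc_eq_zero_iff] at h1
    exact h1 ![⟨m, hmn⟩, ⟨i, hin⟩, ⟨i + 1, h⟩] (occ_of_three p231 π _ _ _
      (by rw [Fin.mk_lt_mk]; omega) (by rw [Fin.mk_lt_mk]; omega)
      (by rw [← pval_mk π m hmn, ← pval_mk π i hin]
          exact iff_of_true (by omega) (by decide))
      (by rw [← pval_mk π m hmn, ← pval_mk π (i + 1) h]
          exact iff_of_false (by omega) (by decide))
      (by rw [← pval_mk π i hin, ← pval_mk π (i + 1) h]
          exact iff_of_false (by omega) (by decide)))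
  · have hgt : i + 1 < m := by omega
    -- pattern 312 at (i, i+1, m)
    rw [numOcc_eq_zero_iff] at h2
    exact h2 ![⟨i, hin⟩, ⟨i + 1, h⟩, ⟨m, hmn⟩] (occ_of_three p312 π _ _ _
      (by rw [Fin.mk_lt_mk]; omega) (by rw [Fin.mk_lt_mk]; omega)
      (by rw [← pval_mk π i hin, ← pval_mk π (i + 1) h]
          exact iff_of_false (by omega) (by decide))
      (by rw [← pval_mk π i hin, ← pval_mk π m hmn]
          exact iff_of_false (by omega) (by decide))
      (by rw [← pval_mk π (i + 1) h, ← pval_mk π m hmn]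
          exact iff_of_true (by omega) (by decide)))

lemma avoids_of_cond {n : ℕ} {π : Equiv.Perm (Fin n)} (hC : Cond π) :
    numOcc p231 π = 0 ∧ numOcc p312 π = 0 := by
  constructor
  · rw [numOcc_eq_zero_iff]
    rintro f ⟨hmono, hpat⟩
    have h01 : π (f 0) < π (f 1) := (hpat 0 1).mpr (by decide)
    have h20 : π (f 2) < π (f 0) := (hpat 2 0).mpr (by decide)
    have hf01 : f 0 < f 1 := hmono (by decide)
    have hf12 : f 1 < f 2 := hmono (by decide)
    rw [Fin.lt_def] at h01 h20 hf01 hf12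
    rw [← pval_fin π (f 0), ← pval_fin π (f 1)] at h01
    rw [← pval_fin π (f 2), ← pval_fin π (f 0)] at h20
    obtain ⟨m, hm1, hm2, hm3, hm4⟩ := ivt hC ((f 2).val - (f 1).val) (f 1).val (f 2).val rfl
      (by omega) (f 2).isLt (pval π (f 0).val) (by omega) (by omega)
    have := pval_inj π hm3 (f 0).isLt hm4
    omega
  · rw [numOcc_eq_zero_iff]
    rintro f ⟨hmono, hpat⟩
    have h12 : π (f 1) < π (f 2) := (hpat 1 2).mpr (by decide)
    have h20 : π (f 2) < π (f 0) := (hpat 2 0).mpr (by decide)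
    have hf01 : f 0 < f 1 := hmono (by decide)
    have hf12 : f 1 < f 2 := hmono (by decide)
    rw [Fin.lt_def] at h12 h20 hf01 hf12
    rw [← pval_fin π (f 1), ← pval_fin π (f 2)] at h12
    rw [← pval_fin π (f 2), ← pval_fin π (f 0)] at h20
    obtain ⟨m, hm1, hm2, hm3, hm4⟩ := ivt hC ((f 1).val - (f 0).val) (f 0).val (f 1).val rfl
      (by omega) (f 1).isLt (pval π (f 2).val) (by omega) (by omega)
    have := pval_inj π hm3 (f 2).isLt hm4
    omega

lemma sperm_ext {a b : ℕ} (h : a = b) (ρ : Equiv.Perm (Fin a)) (π : Equiv.Perm (Fin b))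
    (hv : ∀ i : ℕ, i < a → pval ρ i = pval π i) :
    (⟨a, ρ⟩ : SPerm) = ⟨b, π⟩ := by
  subst h
  refine congrArg (Sigma.mk a) (Equiv.ext fun x => Fin.ext ?_)
  rw [← pval_fin ρ x, ← pval_fin π x]
  exact hv x.val x.isLt

lemma cond_comp {m k : ℕ} (τ : Equiv.Perm (Fin k)) (hτ : Cond τ) :
    Cond (permComp (Fin.revPerm : Equiv.Perm (Fin m)) τ) := by
  intro i h
  rw [pval_permComp _ _ i (by omega), pval_permComp _ _ (i + 1) h]
  rcases Nat.lt_trichotomy (i + 1) m with h1 | h1 | h1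
  · rw [if_pos (by omega), if_pos h1, pval_mk _ i (by omega), pval_mk _ (i + 1) h1]
    simp only [Fin.revPerm_apply, Fin.val_rev]
    omega
  · rw [if_pos (by omega), if_neg (by omega), pval_mk _ i (by omega)]
    simp only [Fin.revPerm_apply, Fin.val_rev]
    omega
  · rw [if_neg (by omega), if_neg (by omega)]
    have := hτ (i - m) (by omega)
    rw [show i + 1 - m = i - m + 1 from by omega]
    omega

lemma foldr_cond (L : List SPerm)
    (hL : ∀ q ∈ L, q.2 = (Fin.revPerm : Equiv.Perm (Fin q.1))) :
    Cond (L.foldr SPerm.comp ⟨0, 1⟩).2 := by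
  induction L with
  | nil =>
    intro i h
    have e : (List.foldr SPerm.comp ⟨0, 1⟩ ([] : List SPerm)).fst = 0 := rfl
    omega
  | cons q L ih =>
    show Cond (permComp q.2 (L.foldr SPerm.comp ⟨0, 1⟩).2)
    rw [hL q List.mem_cons_self]
    exact cond_comp _ (ih fun q hq => hL q (List.mem_cons_of_mem _ hq))

lemma exists_blocks : ∀ n : ℕ, ∀ π : Equiv.Perm (Fin n), Cond π →
    ∃ L : List SPerm, (∀ q ∈ L, 1 ≤ q.1 ∧ q.2 = (Fin.revPerm : Equiv.Perm (Fin q.1))) ∧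
      L.foldr SPerm.comp ⟨0, 1⟩ = ⟨n, π⟩ := by
  intro n
  induction n using Nat.strong_induction_on with
  | _ n ih =>
    intro π hC
    rcases Nat.eq_zero_or_pos n with rfl | hn
    · exact ⟨[], by simp, congrArg (Sigma.mk 0) (Subsingleton.elim _ _)⟩
    obtain ⟨ℓ, hℓdef⟩ : ∃ ℓ : ℕ, ℓ = pval π 0 + 1 := ⟨_, rfl⟩
    have hℓn : ℓ ≤ n := by have := pval_lt π hn; omega
    have hℓ1 : 1 ≤ ℓ := by omega
    -- (a) the first block is decreasing
    have ha : ∀ i : ℕ, i < ℓ → pval π i = ℓ - 1 - i := by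
      intro i
      induction i using Nat.strong_induction_on with
      | _ i ih2 =>
        intro hi
        match i, hi with
        | 0, _ => omega
        | (j + 1), hi =>
          have hj := ih2 j (by omega) (by omega)
          have hcj := hC j (by omega)
          by_contra hne
          have hgt : ℓ - 1 - (j + 1) < pval π (j + 1) := by omega
          rcases Nat.lt_or_ge (pval π (j + 1)) ℓ with hlt | hge2
          · -- its value is already taken by an earlier position
            have hkv := ih2 (ℓ - 1 - pval π (j + 1)) (by omega) (by omega)
            have he : pval π (ℓ - 1 - pval π (j + 1)) = pval π (j + 1) := by omega
            have := pval_inj π (by omega) (by omega) he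
            omega
          · -- value jumps to ≥ ℓ; locate the value ℓ-2-j and apply ivt
            obtain ⟨m, hmn, hmv⟩ := pval_surj π (show ℓ - 1 - (j + 1) < n by omega)
            have hmgt : j + 1 < m := by
              rcases Nat.lt_trichotomy m (j + 1) with h' | h' | h'
              · have := ih2 m (by omega) (by omega); omega
              · subst h'; omega
              · exact h'
            obtain ⟨m', hm'1, hm'2, hm'n, hm'v⟩ := ivt hC (m - (j + 1)) (j + 1) m rfl
              (by omega) hmn (ℓ - 1 - j) (by omega) (by omega)
            have : m' = j := pval_inj π hm'n (by omega) (by omega)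
            omega
    -- (b) later positions carry values ≥ ℓ
    have hb : ∀ x : ℕ, ℓ ≤ x → x < n → ℓ ≤ pval π x := by
      intro x hx1 hx2
      by_contra hcx
      push_neg at hcx
      have h1 := ha (ℓ - 1 - pval π x) (by omega)
      have he : pval π (ℓ - 1 - pval π x) = pval π x := by omega
      have := pval_inj π (by omega) hx2 he
      omega
    have hbinv : ∀ x : ℕ, ℓ ≤ x → x < n → ℓ ≤ pval π.symm x := by
      intro x hx1 hx2
      by_contra hcx
      push_neg at hcx
      have h1 := ha (pval π.symm x) hcx
      have h2 := pval_pval_symm π hx2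
      omega
    obtain ⟨k, hk⟩ : ∃ k : ℕ, n = ℓ + k := ⟨n - ℓ, by omega⟩
    have haux : ∀ j : Fin k, pval π (ℓ + j.val) - ℓ < k := by
      intro j
      have h1 := hb (ℓ + j.val) (by omega) (by omega)
      have h2 := pval_lt π (show ℓ + j.val < n by omega)
      omega
    have haux' : ∀ j : Fin k, pval π.symm (ℓ + j.val) - ℓ < k := by
      intro j
      have h1 := hbinv (ℓ + j.val) (by omega) (by omega)
      have h2 := pval_lt π.symm (show ℓ + j.val < n by omega)
      omega
    let π' : Equiv.Perm (Fin k) :=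
      { toFun := fun j => ⟨pval π (ℓ + j.val) - ℓ, haux j⟩
        invFun := fun j => ⟨pval π.symm (ℓ + j.val) - ℓ, haux' j⟩
        left_inv := by
          intro j
          apply Fin.ext
          show pval π.symm (ℓ + (pval π (ℓ + j.val) - ℓ)) - ℓ = j.val
          have h1 := hb (ℓ + j.val) (by omega) (by omega)
          rw [show ℓ + (pval π (ℓ + j.val) - ℓ) = pval π (ℓ + j.val) from by omega,
            pval_symm_pval π (show ℓ + j.val < n by omega)]
          omega
        right_inv := by
          intro j
          apply Fin.ext
          show pval π (ℓ + (pval π.symm (ℓ + j.val) - ℓ)) - ℓ = j.val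
          have h1 := hbinv (ℓ + j.val) (by omega) (by omega)
          rw [show ℓ + (pval π.symm (ℓ + j.val) - ℓ) = pval π.symm (ℓ + j.val) from by omega,
            pval_pval_symm π (show ℓ + j.val < n by omega)]
          omega }
    have eπ' : ∀ j : ℕ, (hj : j < k) → pval π' j = pval π (ℓ + j) - ℓ := by
      intro j hj
      rw [pval_mk π' j hj]
      rfl
    have hCπ' : Cond π' := by
      intro j hjk
      rw [eπ' j (by omega), eπ' (j + 1) hjk]
      have hc := hC (ℓ + j) (by omega)
      have hb1 := hb (ℓ + j) (by omega) (by omega)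
      rw [show ℓ + (j + 1) = ℓ + j + 1 from rfl]
      omega
    obtain ⟨L', hL', hfold'⟩ := ih k (by omega) π' hCπ'
    refine ⟨⟨ℓ, Fin.revPerm⟩ :: L', ?_, ?_⟩
    · intro q hq
      rcases List.mem_cons.mp hq with rfl | hq'
      · exact ⟨hℓ1, rfl⟩
      · exact hL' q hq'
    · show SPerm.comp ⟨ℓ, Fin.revPerm⟩ (L'.foldr SPerm.comp ⟨0, 1⟩) = ⟨n, π⟩
      rw [hfold']
      show (⟨ℓ + k, permComp Fin.revPerm π'⟩ : SPerm) = ⟨n, π⟩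
      apply sperm_ext (by omega)
      intro i hi
      rw [pval_permComp _ _ i hi]
      by_cases hiℓ : i < ℓ
      · rw [if_pos hiℓ, pval_mk _ i hiℓ]
        simp only [Fin.revPerm_apply, Fin.val_rev]
        have := ha i hiℓ
        omega
      · rw [if_neg hiℓ, eπ' (i - ℓ) (by omega),
          show ℓ + (i - ℓ) = i from by omega]
        have := hb i (by omega) (by omega)
        omega

theorem avoids_231_312_iff_blocks_decreasing {n : ℕ} (π : Equiv.Perm (Fin n)) :
    (numOcc p231 π = 0 ∧ numOcc p312 π = 0) ↔
      ∃ L : List SPerm, (∀ q ∈ L, 1 ≤ q.1 ∧ q.2 = (Fin.revPerm : Equiv.Perm (Fin q.1))) ∧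
        L.foldr SPerm.comp ⟨0, 1⟩ = ⟨n, π⟩ := by
  constructor
  · rintro ⟨h1, h2⟩
    exact exists_blocks n π (cond_of_avoids h1 h2)
  · rintro ⟨L, hL, hfold⟩
    have h := foldr_cond L (fun q hq => (hL q hq).2)
    rw [hfold] at h
    exact avoids_of_cond h
end

section
/- A permutation π avoids both 231 and 321 if and only if every block in its decomposition into indecomposable permutations is of the form ℓ 1 2 ⋯ (ℓ−1) for some ℓ ≥ 1. -/
lemma avoid_iff {n : ℕ} (π : Equiv.Perm (Fin n)) :
    (numOcc p231 π = 0 ∧ numOcc p321 π = 0) ↔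
      ∀ i j k : Fin n, i < j → j < k → π k < π i → π k < π j → False := by
  rw [numOcc_eq_zero_iff, numOcc_eq_zero_iff]
  constructor
  · rintro ⟨h231, h321⟩ i j k hij hjk hki hkj
    set f : Fin 3 → Fin n := fun a => if a.val = 0 then i else if a.val = 1 then j else k with hf
    have hmono : StrictMono f := by
      rw [Fin.strictMono_iff_lt_succ]
      intro a
      fin_cases a <;> first | exact hij | exact hjk
    have hki' : (π k : ℕ) < π i := hki
    have hkj' : (π k : ℕ) < π j := hkj
    rcases lt_or_gt_of_ne (fun h => absurd (π.injective h) (Fin.ne_of_lt hij)) with hπ | hπ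
    · -- π i < π j : occurrence of 231
      have hπ' : (π i : ℕ) < π j := hπ
      refine h231 f ⟨hmono, ?_⟩
      intro a b
      fin_cases a <;> fin_cases b <;>
        first
          | exact iff_of_true (by first | exact hπ | exact hki | exact hkj) (by decide)
          | exact iff_of_false (by first | exact lt_irrefl _ | exact lt_asymm hπ | exact lt_asymm hki | exact lt_asymm hkj) (by decide)
    · have hπ' : (π j : ℕ) < π i := hπ
      refine h321 f ⟨hmono, ?_⟩
      intro a b
      fin_cases a <;> fin_cases b <;>
        first
          | exact iff_of_true (by first | exact hπ | exact hki | exact hkj) (by decide)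
          | exact iff_of_false (by first | exact lt_irrefl _ | exact lt_asymm hπ | exact lt_asymm hki | exact lt_asymm hkj) (by decide)
  · intro h
    constructor <;> rintro f ⟨hmono, hiff⟩
    · exact h (f 0) (f 1) (f 2) (hmono (by decide)) (hmono (by decide))
        ((hiff 2 0).mpr (by decide)) ((hiff 2 1).mpr (by decide))
    · exact h (f 0) (f 1) (f 2) (hmono (by decide)) (hmono (by decide))
        ((hiff 2 0).mpr (by decide)) ((hiff 2 1).mpr (by decide))

lemma cond_iff_pw {n : ℕ} (π : Equiv.Perm (Fin n)) :
    (∀ i j k : Fin n, i < j → j < k → π k < π i → π k < π j → False) ↔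
      ∀ i : Fin n, (i : ℕ) ≤ (π i : ℕ) + 1 := by
  constructor
  · intro h k
    by_contra hc
    push_neg at hc
    -- (π k : ℕ) + 1 < k
    set A := (Finset.Iio k).filter (fun p => π k < π p) with hA
    set B := (Finset.Iio k).filter (fun p => ¬ π k < π p) with hB
    have hcard : A.card + B.card = (k : ℕ) := by
      rw [hA, hB, Finset.card_filter_add_card_filter_not, Fin.card_Iio]
    have hBcard : B.card ≤ (π k : ℕ) := by
      have := Finset.card_le_card_of_injOn (s := B) π (t := Finset.Iio (π k)) ?_
        (π.injective.injOn)
      · simpa [Fin.card_Iio] using this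
      · intro p hp
        rw [hB, Finset.mem_coe, Finset.mem_filter, Finset.mem_Iio] at hp
        rw [Finset.mem_coe, Finset.mem_Iio]
        rcases lt_or_eq_of_le (not_lt.mp hp.2) with h' | h'
        · exact h'
        · exact absurd (π.injective h') (Fin.ne_of_lt hp.1)
    have h2 : 1 < A.card := by omega
    obtain ⟨a, ha, b, hb, hab⟩ := Finset.one_lt_card.mp h2
    rw [hA, Finset.mem_filter, Finset.mem_Iio] at ha hb
    rcases Ne.lt_or_gt hab with hlt | hlt
    · exact h a b k hlt hb.1 ha.2 hb.2
    · exact h b a k hlt ha.1 hb.2 ha.2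
  · intro h i j k hij hjk hki hkj
    set S := Finset.univ.filter (fun p => π p ≤ π k) with hS
    have hScard : S.card = (π k : ℕ) + 1 := by
      have himg : Finset.image π S = Finset.Iic (π k) := by
        ext v
        simp only [hS, Finset.mem_image, Finset.mem_filter, Finset.mem_univ, true_and,
          Finset.mem_Iic]
        constructor
        · rintro ⟨p, hp, rfl⟩; exact hp
        · intro hv; exact ⟨π⁻¹ v, by simpa using hv, by simp⟩
      have := Finset.card_image_of_injective S π.injective
      rw [himg, Fin.card_Iic] at this
      omega
    have hiS : i ∉ insert j S := by
      simp only [Finset.mem_insert, hS, Finset.mem_filter, Finset.mem_univ, true_and]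
      push_neg
      exact ⟨Fin.ne_of_lt hij, hki⟩
    have hjS : j ∉ S := by
      simp only [hS, Finset.mem_filter, Finset.mem_univ, true_and]
      exact not_le.mpr hkj
    set T := insert i (insert j S) with hT
    have hTcard : T.card = (π k : ℕ) + 3 := by
      rw [hT, Finset.card_insert_of_notMem hiS, Finset.card_insert_of_notMem hjS, hScard]
    set W := Finset.univ.filter (fun p : Fin n => (p : ℕ) ≤ (π k : ℕ) + 1) with hW
    have hTW : T ⊆ W := by
      intro p hp
      rw [hW, Finset.mem_filter]
      refine ⟨Finset.mem_univ _, ?_⟩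
      have hk' : (k : ℕ) ≤ (π k : ℕ) + 1 := h k
      have hi' : (i : ℕ) < (j : ℕ) := hij
      have hj' : (j : ℕ) < (k : ℕ) := hjk
      rw [hT, Finset.mem_insert, Finset.mem_insert] at hp
      rcases hp with h1 | h1 | hp
      · rw [h1]; omega
      · rw [h1]; omega
      · rw [hS, Finset.mem_filter] at hp
        have h1 : (p : ℕ) ≤ (π p : ℕ) + 1 := h p
        have h2 : (π p : ℕ) ≤ (π k : ℕ) := hp.2
        omega
    have hWcard : W.card ≤ (π k : ℕ) + 2 := by
      have := Finset.card_le_card_of_injOn (s := W)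
        (f := fun p : Fin n => (⟨(p : ℕ) % ((π k : ℕ) + 2), Nat.mod_lt _ (by omega)⟩ :
          Fin ((π k : ℕ) + 2)))
        (t := Finset.univ) (fun p _ => Finset.mem_univ _) ?_
      · simpa using this
      · intro p hp q hq hpq
        simp only [hW, Finset.coe_filter, Finset.mem_univ, true_and, Set.mem_setOf_eq,
          Finset.mem_coe, Finset.mem_filter] at hp hq
        have hp2 := hp; have hq2 := hq
        have : (p : ℕ) % ((π k : ℕ) + 2) = (q : ℕ) % ((π k : ℕ) + 2) :=
          congrArg Fin.val hpq
        rw [Nat.mod_eq_of_lt (by omega), Nat.mod_eq_of_lt (by omega)] at this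
        exact Fin.ext this
    have := Finset.card_le_card hTW
    omega

lemma permComp_castAdd {m n : ℕ} (σ : Equiv.Perm (Fin m)) (τ : Equiv.Perm (Fin n)) (a : Fin m) :
    permComp σ τ (Fin.castAdd n a) = Fin.castAdd n (σ a) := by
  simp [permComp, Equiv.permCongr_apply, finSumFinEquiv_symm_apply_castAdd,
    finSumFinEquiv_apply_left]

lemma permComp_natAdd {m n : ℕ} (σ : Equiv.Perm (Fin m)) (τ : Equiv.Perm (Fin n)) (b : Fin n) :
    permComp σ τ (Fin.natAdd m b) = Fin.natAdd m (τ b) := by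
  simp [permComp, Equiv.permCongr_apply, finSumFinEquiv_symm_apply_natAdd,
    finSumFinEquiv_apply_right]

lemma rotInv_val {ℓ : ℕ} (hl : 1 ≤ ℓ) (a : Fin ℓ) :
    (((finRotate ℓ)⁻¹ a) : ℕ) = if (a : ℕ) = 0 then ℓ - 1 else (a : ℕ) - 1 := by
  obtain ⟨k, rfl⟩ : ∃ k, ℓ = k + 1 := ⟨ℓ - 1, by omega⟩
  set j := (finRotate (k + 1))⁻¹ a with hj
  have hja : finRotate (k + 1) j = a := Equiv.apply_symm_apply _ _
  rw [finRotate_succ_apply] at hja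
  have hva : (a : ℕ) = if j = Fin.last k then 0 else (j : ℕ) + 1 := by
    rw [← hja, Fin.val_add_one]
  rcases eq_or_ne j (Fin.last k) with he | he
  · rw [if_pos he] at hva
    rw [if_pos hva, he, Fin.val_last]
    omega
  · rw [if_neg he] at hva
    have hjk : (j : ℕ) < k := by
      have := j.isLt
      rcases lt_or_eq_of_le (Nat.lt_succ_iff.mp this) with h' | h'
      · exact h'
      · exact absurd (Fin.ext h' : j = Fin.last k) he
    rw [if_neg (by omega)]
    omega

lemma rot_pw {ℓ : ℕ} (hl : 1 ≤ ℓ) (i : Fin ℓ) :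
    (i : ℕ) ≤ (((finRotate ℓ)⁻¹ i) : ℕ) + 1 := by
  rw [rotInv_val hl]
  split_ifs with h <;> omega

lemma pw_permComp {m n : ℕ} {σ : Equiv.Perm (Fin m)} {τ : Equiv.Perm (Fin n)}
    (hσ : ∀ a : Fin m, (a : ℕ) ≤ (σ a : ℕ) + 1) (hτ : ∀ b : Fin n, (b : ℕ) ≤ (τ b : ℕ) + 1) :
    ∀ i : Fin (m + n), (i : ℕ) ≤ (permComp σ τ i : ℕ) + 1 := by
  intro i
  refine Fin.addCases (fun a => ?_) (fun b => ?_) i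
  · rw [permComp_castAdd]
    simpa using hσ a
  · rw [permComp_natAdd]
    have := hτ b
    simp only [Fin.coe_natAdd]
    omega

lemma decomp_pw (L : List SPerm) : ∀ {n : ℕ} (π : Equiv.Perm (Fin n)),
    (∀ q ∈ L, 1 ≤ q.1 ∧ q.2 = (finRotate q.1)⁻¹) →
    L.foldr SPerm.comp ⟨0, 1⟩ = ⟨n, π⟩ →
    ∀ i : Fin n, (i : ℕ) ≤ (π i : ℕ) + 1 := by
  induction L with
  | nil =>
    intro n π _ hfold i
    have h0 : (0 : ℕ) = n := congrArg Sigma.fst hfold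
    exact absurd i.isLt (by omega)
  | cons q L ih =>
    intro n π hq hfold
    rcases hE : L.foldr SPerm.comp ⟨0, 1⟩ with ⟨m, τ⟩
    have hτ := ih τ (fun p hp => hq p (List.mem_cons_of_mem _ hp)) hE
    change SPerm.comp q (L.foldr SPerm.comp ⟨0, 1⟩) = _ at hfold
    rw [hE] at hfold
    simp only [SPerm.comp] at hfold
    obtain ⟨h1, h2⟩ := Sigma.mk.inj_iff.mp hfold
    subst h1
    have h2' : permComp q.2 τ = π := eq_of_heq h2
    rw [← h2']
    obtain ⟨hq1, hq2⟩ := hq q List.mem_cons_self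
    refine pw_permComp (fun a => ?_) hτ
    rw [hq2]
    exact rot_pw hq1 a

lemma step {ℓ m : ℕ} (hl : 1 ≤ ℓ) (π : Equiv.Perm (Fin (ℓ + m)))
    (h : ∀ i : Fin (ℓ + m), (i : ℕ) ≤ (π i : ℕ) + 1)
    (hn : 0 < ℓ + m)
    (h0 : (π ⟨0, hn⟩ : ℕ) + 1 = ℓ) :
    ∃ τ : Equiv.Perm (Fin m), (∀ x : Fin m, (x : ℕ) ≤ (τ x : ℕ) + 1) ∧
      π = permComp (finRotate ℓ)⁻¹ τ := by
  have key : ∀ v : ℕ, ∀ hv : v < ℓ + m, 1 ≤ v → v < ℓ → (π ⟨v, hv⟩ : ℕ) = v - 1 := by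
    intro v
    induction v using Nat.strong_induction_on with
    | _ v ihv =>
      intro hv h1 hvℓ
      have hv1 : v - 1 < ℓ + m := by omega
      set p := π⁻¹ ⟨v - 1, hv1⟩ with hp
      have hπp : π p = ⟨v - 1, hv1⟩ := Equiv.apply_symm_apply _ _
      have hple : (p : ℕ) ≤ v := by
        have := h p
        rw [hπp] at this
        simp only at this
        omega
      have hp0 : (p : ℕ) ≠ 0 := by
        intro hc
        have hpz : p = ⟨0, hn⟩ := Fin.ext hc
        rw [hpz] at hπp
        have := congrArg Fin.val hπp
        simp only at this
        omega
      have hpv : (p : ℕ) = v := by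
        by_contra hc
        have hplt : (p : ℕ) < v := by omega
        have h' := ihv (p : ℕ) hplt p.isLt (by omega) (by omega)
        rw [show (⟨(p : ℕ), p.isLt⟩ : Fin (ℓ + m)) = p from Fin.ext rfl, hπp] at h'
        simp only at h'
        omega
      have hpeq : p = ⟨v, hv⟩ := Fin.ext hpv
      rw [hpeq] at hπp
      rw [hπp]
  have hlt : ∀ q : Fin (ℓ + m), (q : ℕ) < ℓ → (π q : ℕ) < ℓ := by
    intro q hq
    rcases Nat.eq_zero_or_pos (q : ℕ) with h' | h'
    · have hq0 : q = ⟨0, hn⟩ := Fin.ext h'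
      rw [hq0]; omega
    · have := key q q.isLt h' hq
      rw [Fin.eta] at this
      omega
  have hge : ∀ p : Fin (ℓ + m), ℓ ≤ (p : ℕ) → ℓ ≤ (π p : ℕ) := by
    intro p hp
    by_contra hc
    push_neg at hc
    rcases eq_or_lt_of_le (Nat.le_sub_one_of_lt hc) with h' | h'
    · -- (π p : ℕ) = ℓ - 1
      have : π p = π ⟨0, hn⟩ := Fin.ext (by omega)
      have := π.injective this
      rw [this] at hp
      simp at hp
      omega
    · have hv1 : (π p : ℕ) + 1 < ℓ + m := by omega
      have := key ((π p : ℕ) + 1) hv1 (by omega) (by omega)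
      have heq : π ⟨(π p : ℕ) + 1, hv1⟩ = π p := Fin.ext (by omega)
      have := π.injective heq
      have := congrArg Fin.val this
      simp only at this
      omega
  have hge' : ∀ p : Fin (ℓ + m), ℓ ≤ (p : ℕ) → ℓ ≤ (π⁻¹ p : ℕ) := by
    intro p hp
    by_contra hc
    push_neg at hc
    have := hlt (π⁻¹ p) hc
    rw [show π (π⁻¹ p) = p from π.apply_symm_apply p] at this
    omega
  have hτfun : ∀ x : Fin m, (π (Fin.natAdd ℓ x) : ℕ) - ℓ < m := by
    intro x
    have h1 := hge (Fin.natAdd ℓ x) (by simp)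
    have h2 := (π (Fin.natAdd ℓ x)).isLt
    omega
  have hτinv : ∀ x : Fin m, (π⁻¹ (Fin.natAdd ℓ x) : ℕ) - ℓ < m := by
    intro x
    have h1 := hge' (Fin.natAdd ℓ x) (by simp)
    have h2 := (π⁻¹ (Fin.natAdd ℓ x)).isLt
    omega
  refine ⟨{
    toFun := fun x => ⟨(π (Fin.natAdd ℓ x) : ℕ) - ℓ, hτfun x⟩
    invFun := fun x => ⟨(π⁻¹ (Fin.natAdd ℓ x) : ℕ) - ℓ, hτinv x⟩
    left_inv := by
      intro x
      have h1 := hge (Fin.natAdd ℓ x) (by simp)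
      have e1 : Fin.natAdd ℓ ⟨(π (Fin.natAdd ℓ x) : ℕ) - ℓ, hτfun x⟩ = π (Fin.natAdd ℓ x) :=
        Fin.ext (by simp; omega)
      apply Fin.ext
      simp only [e1, show π⁻¹ (π (Fin.natAdd ℓ x)) = Fin.natAdd ℓ x from π.symm_apply_apply _, Fin.coe_natAdd]
      omega
    right_inv := by
      intro x
      have h1 := hge' (Fin.natAdd ℓ x) (by simp)
      have e1 : Fin.natAdd ℓ ⟨(π⁻¹ (Fin.natAdd ℓ x) : ℕ) - ℓ, hτinv x⟩ = π⁻¹ (Fin.natAdd ℓ x) :=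
        Fin.ext (by simp only [Fin.coe_natAdd]; omega)
      apply Fin.ext
      simp only [e1, show π (π⁻¹ (Fin.natAdd ℓ x)) = Fin.natAdd ℓ x from π.apply_symm_apply _, Fin.coe_natAdd]
      omega }, ?_, ?_⟩
  · intro x
    have h1 := hge (Fin.natAdd ℓ x) (by simp)
    have h2 := h (Fin.natAdd ℓ x)
    simp only [Fin.coe_natAdd] at h2 ⊢
    simp only [Equiv.coe_fn_mk]
    omega
  · apply Equiv.ext
    intro x
    refine Fin.addCases (motive := fun x => π x = permComp (finRotate ℓ)⁻¹ _ x)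
      (fun a => ?_) (fun b => ?_) x
    · beta_reduce
      rw [permComp_castAdd]
      apply Fin.ext
      rw [Fin.coe_castAdd, rotInv_val hl]
      rcases Nat.eq_zero_or_pos (a : ℕ) with h' | h'
      · have : Fin.castAdd m a = ⟨0, hn⟩ := Fin.ext (by simpa using h')
        rw [this, if_pos h']
        omega
      · have hcv : ((Fin.castAdd m a : Fin (ℓ + m)) : ℕ) = (a : ℕ) := rfl
        have := key (a : ℕ) (by omega) h' a.isLt
        rw [show (⟨(a : ℕ), by omega⟩ : Fin (ℓ + m)) = Fin.castAdd m a from Fin.ext rfl] at this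
        rw [this, if_neg (by omega)]
    · beta_reduce
      rw [permComp_natAdd]
      apply Fin.ext
      have h1 := hge (Fin.natAdd ℓ b) (by simp)
      simp only [Fin.coe_natAdd, Equiv.coe_fn_mk]
      omega

lemma sigma_cast {n n' : ℕ} (h : n = n') (π : Equiv.Perm (Fin n)) :
    (⟨n, π⟩ : SPerm) = ⟨n', (finCongr h).permCongr π⟩ := by
  subst h
  have he : (finCongr (rfl : n = n)).permCongr π = π :=
    Equiv.ext fun x => Fin.ext (by simp [Equiv.permCongr_apply])
  rw [he]

lemma pw_decomp (n : ℕ) : ∀ π : Equiv.Perm (Fin n), (∀ i : Fin n, (i : ℕ) ≤ (π i : ℕ) + 1) →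
    ∃ L : List SPerm, (∀ q ∈ L, 1 ≤ q.1 ∧ q.2 = (finRotate q.1)⁻¹) ∧
      L.foldr SPerm.comp ⟨0, 1⟩ = ⟨n, π⟩ := by
  induction n using Nat.strong_induction_on with
  | _ n ih =>
    intro π h
    rcases Nat.eq_zero_or_pos n with hn | hn
    · subst hn
      refine ⟨[], by simp, ?_⟩
      show (⟨0, 1⟩ : SPerm) = ⟨0, π⟩
      congr 1
      exact Equiv.ext fun i => Fin.elim0 i
    · set ℓ : ℕ := (π ⟨0, hn⟩ : ℕ) + 1 with hℓ
      have hl1 : 1 ≤ ℓ := by omega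
      have hln : ℓ ≤ n := (π ⟨0, hn⟩).isLt
      obtain ⟨m, hm⟩ : ∃ m, n = ℓ + m := ⟨n - ℓ, by omega⟩
      set π' : Equiv.Perm (Fin (ℓ + m)) := (finCongr hm).permCongr π with hπ'
      have hval : ∀ x : Fin (ℓ + m), (π' x : ℕ) = (π ((finCongr hm).symm x) : ℕ) := by
        intro x
        simp [hπ', Equiv.permCongr_apply]
      have hpw' : ∀ x : Fin (ℓ + m), (x : ℕ) ≤ (π' x : ℕ) + 1 := by
        intro x
        rw [hval]
        have := h ((finCongr hm).symm x)
        simpa using this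
      have hn' : 0 < ℓ + m := by omega
      have h0' : (π' ⟨0, hn'⟩ : ℕ) + 1 = ℓ := by
        rw [hval]
        have : (finCongr hm).symm (⟨0, hn'⟩ : Fin (ℓ + m)) = ⟨0, hn⟩ := Fin.ext (by simp)
        rw [this]
      obtain ⟨τ, hτpw, hτeq⟩ := step hl1 π' hpw' hn' h0'
      obtain ⟨L', hL', hfold⟩ := ih m (by omega) τ hτpw
      refine ⟨⟨ℓ, (finRotate ℓ)⁻¹⟩ :: L', ?_, ?_⟩
      · rintro q hq
        rcases List.mem_cons.mp hq with rfl | hq'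
        · exact ⟨hl1, rfl⟩
        · exact hL' q hq'
      · show SPerm.comp ⟨ℓ, (finRotate ℓ)⁻¹⟩ (L'.foldr SPerm.comp ⟨0, 1⟩) = _
        rw [hfold]
        show (⟨ℓ + m, permComp (finRotate ℓ)⁻¹ τ⟩ : SPerm) = ⟨n, π⟩
        rw [← hτeq]
        exact (sigma_cast hm π).symm

theorem avoids_231_321_iff_blocks_rotation {n : ℕ} (π : Equiv.Perm (Fin n)) :
    (numOcc p231 π = 0 ∧ numOcc p321 π = 0) ↔
      ∃ L : List SPerm, (∀ q ∈ L, 1 ≤ q.1 ∧ q.2 = (finRotate q.1)⁻¹) ∧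
        L.foldr SPerm.comp ⟨0, 1⟩ = ⟨n, π⟩ := by
  rw [avoid_iff, cond_iff_pw]
  constructor
  · exact pw_decomp n π
  · rintro ⟨L, hL, hfold⟩
    exact decomp_pw L π hL hfold
end

section
/- Let σ = π_{i,j,p} with i, j ≥ 1, p ≥ 0, and let k, ℓ ≥ 1, m ≥ 0. Then the number of occurrences of σ in π_{k,ℓ,m} equals binomial(k,i)·binomial(ℓ,j)·binomial(m,p). -/
set_option maxHeartbeats 1600000


/-- The permutation `(ℓ+1, …, ℓ+k, 1, …, ℓ)` of `[k+ℓ]`. -/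
def rotBlock (k ℓ : ℕ) : Equiv.Perm (Fin (k + ℓ)) :=
  finSumFinEquiv.symm.trans ((Equiv.sumComm (Fin k) (Fin ℓ)).trans
    (finSumFinEquiv.trans (finCongr (Nat.add_comm ℓ k))))

/-- The permutation `(ℓ+1, …, ℓ+k, 1, …, ℓ, k+ℓ+1, …, k+ℓ+m)` of `[k+ℓ+m]`. -/
def piKLM (k ℓ m : ℕ) : Equiv.Perm (Fin (k + ℓ + m)) :=
  permComp (rotBlock k ℓ) (1 : Equiv.Perm (Fin m))

lemma permComp_left {a b : ℕ} (σ : Equiv.Perm (Fin a)) (τ : Equiv.Perm (Fin b))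
    (y : Fin a) : permComp σ τ (Fin.castAdd b y) = Fin.castAdd b (σ y) := by
  simp [permComp, Equiv.permCongr, Equiv.sumCongr]

lemma permComp_right {a b : ℕ} (σ : Equiv.Perm (Fin a)) (τ : Equiv.Perm (Fin b))
    (y : Fin b) : permComp σ τ (Fin.natAdd a y) = Fin.natAdd a (τ y) := by
  simp [permComp, Equiv.permCongr, Equiv.sumCongr]

lemma rotBlock_lo {k ℓ : ℕ} (y : Fin k) :
    (rotBlock k ℓ (Fin.castAdd ℓ y) : ℕ) = y + ℓ := by
  simp [rotBlock]

lemma rotBlock_hi {k ℓ : ℕ} (y : Fin ℓ) :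
    (rotBlock k ℓ (Fin.natAdd k y) : ℕ) = y := by
  simp [rotBlock]

lemma piKLM_lo {k ℓ m : ℕ} (x : Fin (k+ℓ+m)) (hx : (x:ℕ) < k) :
    (piKLM k ℓ m x : ℕ) = x + ℓ := by
  have h : x = Fin.castAdd m (Fin.castAdd ℓ ⟨(x:ℕ), hx⟩) := by apply Fin.ext; simp
  rw [h, piKLM, permComp_left]
  have := rotBlock_lo (ℓ := ℓ) ⟨(x:ℕ), hx⟩
  simp only [Fin.coe_castAdd]
  rw [this]

lemma piKLM_mid {k ℓ m : ℕ} (x : Fin (k+ℓ+m)) (h1 : k ≤ (x:ℕ)) (h2 : (x:ℕ) < k + ℓ) :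
    (piKLM k ℓ m x : ℕ) = x - k := by
  have h : x = Fin.castAdd m (Fin.natAdd k ⟨(x:ℕ) - k, by omega⟩) := by
    apply Fin.ext; simp; omega
  rw [h, piKLM, permComp_left]
  have := rotBlock_hi (k := k) (⟨(x:ℕ) - k, by omega⟩ : Fin ℓ)
  simp only [Fin.coe_castAdd]
  rw [this]; simp

lemma piKLM_hi {k ℓ m : ℕ} (x : Fin (k+ℓ+m)) (h1 : k + ℓ ≤ (x:ℕ)) :
    (piKLM k ℓ m x : ℕ) = x := by
  have h : x = Fin.natAdd (k+ℓ) ⟨(x:ℕ) - (k+ℓ), by omega⟩ := by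
    apply Fin.ext; simp; omega
  rw [h, piKLM, permComp_right]
  simp

lemma piKLM_val {k ℓ m : ℕ} (x : Fin (k+ℓ+m)) :
    (piKLM k ℓ m x : ℕ) = if (x:ℕ) < k then x + ℓ else if (x:ℕ) < k+ℓ then x - k else x := by
  split_ifs with h1 h2
  · exact piKLM_lo x h1
  · exact piKLM_mid x (by omega) h2
  · exact piKLM_hi x (by omega)

def BlocksP (i j p k ℓ m : ℕ) (f : Fin (i+j+p) → Fin (k+ℓ+m)) : Prop :=
  ∀ a : Fin (i+j+p), ((a:ℕ) < i → (f a:ℕ) < k) ∧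
    (i ≤ (a:ℕ) → (a:ℕ) < i+j → k ≤ (f a:ℕ) ∧ (f a:ℕ) < k+ℓ) ∧
    (i+j ≤ (a:ℕ) → k+ℓ ≤ (f a:ℕ))

lemma isOcc_iff {i j p k ℓ m : ℕ} (hi : 1 ≤ i) (hj : 1 ≤ j) (hk : 1 ≤ k) (hl : 1 ≤ ℓ)
    (f : Fin (i+j+p) → Fin (k+ℓ+m)) :
    IsOccurrence (piKLM i j p) (piKLM k ℓ m) f ↔ StrictMono f ∧ BlocksP i j p k ℓ m f := by
  constructor
  · rintro ⟨hf, hiso⟩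
    refine ⟨hf, ?_⟩
    set u : Fin (i+j+p) := ⟨i-1, by omega⟩ with hu_def
    set v : Fin (i+j+p) := ⟨i, by omega⟩ with hv_def
    have hσu : (piKLM i j p u : ℕ) = (i-1) + j := piKLM_lo u (by simp [hu_def]; omega)
    have hσv : (piKLM i j p v : ℕ) = 0 := by
      have := piKLM_mid v (by simp [hv_def]) (by simp [hv_def]; omega)
      simpa [hv_def] using this
    have huv : (piKLM k ℓ m (f v) : ℕ) < (piKLM k ℓ m (f u) : ℕ) := by
      have := (hiso v u).2 (by rw [Fin.lt_def, hσu, hσv]; omega)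
      exact this
    have hfuv : (f u : ℕ) < (f v : ℕ) := by
      have := hf (show u < v by rw [Fin.lt_def]; simp [hu_def, hv_def]; omega)
      exact this
    have hfub : (f u : ℕ) < k+ℓ+m := (f u).isLt
    have hfvb : (f v : ℕ) < k+ℓ+m := (f v).isLt
    have hvu := piKLM_val (f u)
    have hvv := piKLM_val (f v)
    have hfu : (f u : ℕ) < k := by split_ifs at hvu hvv <;> omega
    have hfv : k ≤ (f v : ℕ) ∧ (f v : ℕ) < k + ℓ := by split_ifs at hvu hvv <;> omega
    have hπfu : (piKLM k ℓ m (f u) : ℕ) = (f u : ℕ) + ℓ := piKLM_lo _ hfu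
    intro a
    refine ⟨?_, ?_, ?_⟩
    · intro ha
      have : (f a : ℕ) ≤ (f u : ℕ) := by
        have := hf.monotone (show a ≤ u by rw [Fin.le_def]; simp [hu_def]; omega)
        exact this
      omega
    · intro ha1 ha2
      have h1 : (f v : ℕ) ≤ (f a : ℕ) := by
        have := hf.monotone (show v ≤ a by rw [Fin.le_def]; simp [hv_def]; omega)
        exact this
      have hσa : (piKLM i j p a : ℕ) = (a:ℕ) - i := piKLM_mid a ha1 ha2
      have hlt : (piKLM k ℓ m (f a) : ℕ) < (piKLM k ℓ m (f u) : ℕ) := by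
        have := (hiso a u).2 (by rw [Fin.lt_def, hσu, hσa]; omega)
        exact this
      have hva := piKLM_val (f a)
      have := (f a).isLt
      split_ifs at hva <;> omega
    · intro ha
      have h1 : (f v : ℕ) ≤ (f a : ℕ) := by
        have := hf.monotone (show v ≤ a by rw [Fin.le_def]; simp [hv_def]; omega)
        exact this
      have hσa : (piKLM i j p a : ℕ) = (a:ℕ) := piKLM_hi a ha
      have hgt : (piKLM k ℓ m (f u) : ℕ) < (piKLM k ℓ m (f a) : ℕ) := by
        have := (hiso u a).2 (by rw [Fin.lt_def, hσu, hσa]; omega)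
        exact this
      have hva := piKLM_val (f a)
      have := (f a).isLt
      split_ifs at hva <;> omega
  · rintro ⟨hf, hb⟩
    refine ⟨hf, ?_⟩
    intro a b
    have hab : (f a : ℕ) < (f b : ℕ) ↔ (a:ℕ) < (b:ℕ) := by
      rw [← Fin.lt_def, ← Fin.lt_def]; exact hf.lt_iff_lt
    rw [Fin.lt_def, Fin.lt_def, piKLM_val (f a), piKLM_val (f b),
      piKLM_val a, piKLM_val b]
    obtain ⟨A1, A2, A3⟩ := hb a
    obtain ⟨B1, B2, B3⟩ := hb b
    have := a.isLt; have := b.isLt; have := (f a).isLt; have := (f b).isLt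
    split_ifs <;> omega

variable {i j p k ℓ m : ℕ}

def glue (g1 : Fin i → Fin k) (g2 : Fin j → Fin ℓ) (g3 : Fin p → Fin m)
    (a : Fin (i+j+p)) : Fin (k+ℓ+m) :=
  if h1 : (a:ℕ) < i then ⟨(g1 ⟨(a:ℕ), h1⟩ : ℕ), by have := (g1 ⟨(a:ℕ), h1⟩).isLt; omega⟩
  else if h2 : (a:ℕ) < i + j then
    ⟨k + (g2 ⟨(a:ℕ) - i, by omega⟩ : ℕ), by have := (g2 ⟨(a:ℕ) - i, by omega⟩).isLt; omega⟩
  else ⟨k + ℓ + (g3 ⟨(a:ℕ) - i - j, by omega⟩ : ℕ), by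
    have := (g3 ⟨(a:ℕ) - i - j, by omega⟩).isLt; omega⟩

lemma glue_lo {g1 : Fin i → Fin k} {g2 : Fin j → Fin ℓ} {g3 : Fin p → Fin m}
    {a : Fin (i+j+p)} (h : (a:ℕ) < i) :
    (glue g1 g2 g3 a : ℕ) = g1 ⟨(a:ℕ), h⟩ := by
  rw [glue, dif_pos h]

lemma glue_mid {g1 : Fin i → Fin k} {g2 : Fin j → Fin ℓ} {g3 : Fin p → Fin m}
    {a : Fin (i+j+p)} (h1 : i ≤ (a:ℕ)) (h2 : (a:ℕ) < i + j) :
    (glue g1 g2 g3 a : ℕ) = k + g2 ⟨(a:ℕ) - i, by omega⟩ := by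
  rw [glue, dif_neg (by omega), dif_pos h2]

lemma glue_hi {g1 : Fin i → Fin k} {g2 : Fin j → Fin ℓ} {g3 : Fin p → Fin m}
    {a : Fin (i+j+p)} (h : i + j ≤ (a:ℕ)) :
    (glue g1 g2 g3 a : ℕ) = k + ℓ + g3 ⟨(a:ℕ) - i - j, by omega⟩ := by
  rw [glue, dif_neg (by omega), dif_neg (by omega)]

def toBlocks (G : {g : Fin i → Fin k // StrictMono g} × {g : Fin j → Fin ℓ // StrictMono g} ×
    {g : Fin p → Fin m // StrictMono g}) :
    {f : Fin (i+j+p) → Fin (k+ℓ+m) // StrictMono f ∧ BlocksP i j p k ℓ m f} :=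
  ⟨glue G.1.1 G.2.1.1 G.2.2.1, by
    constructor
    · intro a b hab
      rw [Fin.lt_def] at hab ⊢
      rcases lt_or_ge ((a:ℕ)) i with ha1 | ha1
      · rw [glue_lo ha1]
        rcases lt_or_ge ((b:ℕ)) i with hb1 | hb1
        · rw [glue_lo hb1]
          have := G.1.2 (show (⟨(a:ℕ), ha1⟩ : Fin i) < ⟨(b:ℕ), hb1⟩ from by
            rw [Fin.lt_def]; exact hab)
          rw [Fin.lt_def] at this; exact this
        · rcases lt_or_ge ((b:ℕ)) (i+j) with hb2 | hb2
          · rw [glue_mid hb1 hb2]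
            have := (G.1.1 ⟨(a:ℕ), ha1⟩).isLt; omega
          · rw [glue_hi hb2]
            have := (G.1.1 ⟨(a:ℕ), ha1⟩).isLt; omega
      · rcases lt_or_ge ((a:ℕ)) (i+j) with ha2 | ha2
        · rw [glue_mid ha1 ha2]
          rcases lt_or_ge ((b:ℕ)) (i+j) with hb2 | hb2
          · rw [glue_mid (by omega) hb2]
            have := G.2.1.2 (show (⟨(a:ℕ) - i, by omega⟩ : Fin j) < ⟨(b:ℕ) - i, by omega⟩
              from by rw [Fin.lt_def]; show (a:ℕ) - i < (b:ℕ) - i; omega)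
            rw [Fin.lt_def] at this; omega
          · rw [glue_hi hb2]
            have := (G.2.1.1 ⟨(a:ℕ) - i, by omega⟩).isLt; omega
        · rw [glue_hi ha2, glue_hi (by omega)]
          have := G.2.2.2 (show (⟨(a:ℕ) - i - j, by omega⟩ : Fin p) <
              ⟨(b:ℕ) - i - j, by omega⟩ from by
                rw [Fin.lt_def]; show (a:ℕ) - i - j < (b:ℕ) - i - j; omega)
          rw [Fin.lt_def] at this; omega
    · intro a
      refine ⟨fun h => ?_, fun h1 h2 => ?_, fun h => ?_⟩
      · rw [glue_lo h]; exact (G.1.1 ⟨(a:ℕ), h⟩).isLt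
      · rw [glue_mid h1 h2]
        have := (G.2.1.1 ⟨(a:ℕ) - i, by omega⟩).isLt
        omega
      · rw [glue_hi h]; omega⟩

lemma toBlocks_injective :
    Function.Injective (toBlocks (i := i) (j := j) (p := p) (k := k) (ℓ := ℓ) (m := m)) := by
  intro G G' h
  have h' : ∀ a : Fin (i+j+p),
      (glue G.1.1 G.2.1.1 G.2.2.1 a : ℕ) = (glue G'.1.1 G'.2.1.1 G'.2.2.1 a : ℕ) :=
    fun a => congrArg Fin.val (congrFun (congrArg Subtype.val h) a)
  refine Prod.ext ?_ (Prod.ext ?_ ?_) <;> apply Subtype.ext <;> funext a <;> apply Fin.ext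
  · have hh := h' ⟨(a:ℕ), by omega⟩
    rw [glue_lo a.isLt, glue_lo a.isLt] at hh
    simpa using hh
  · have hh := h' ⟨i + (a:ℕ), by omega⟩
    rw [glue_mid (by simp) (by simp [a.isLt]), glue_mid (by simp) (by simp [a.isLt])] at hh
    simpa using hh
  · have hh := h' ⟨i + j + (a:ℕ), by omega⟩
    rw [glue_hi (by simp), glue_hi (by simp)] at hh
    simpa [show i + j + (a:ℕ) - i - j = (a:ℕ) from by omega] using hh


def ofBlocks (F : {f : Fin (i+j+p) → Fin (k+ℓ+m) // StrictMono f ∧ BlocksP i j p k ℓ m f}) :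
    {g : Fin i → Fin k // StrictMono g} × {g : Fin j → Fin ℓ // StrictMono g} ×
      {g : Fin p → Fin m // StrictMono g} :=
  ⟨⟨fun a => ⟨(F.1 ⟨(a:ℕ), by omega⟩ : ℕ), (F.2.2 _).1 a.isLt⟩, by
      intro a b hab
      rw [Fin.lt_def]
      exact F.2.1 (show (⟨(a:ℕ), by omega⟩ : Fin (i+j+p)) < ⟨(b:ℕ), by omega⟩ from hab)⟩,
    ⟨fun a => ⟨(F.1 ⟨i + (a:ℕ), by omega⟩ : ℕ) - k, by
        have := (F.2.2 ⟨i + (a:ℕ), by omega⟩).2.1 (by simp) (by simp [a.isLt])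
        omega⟩, by
      intro a b hab
      rw [Fin.lt_def]
      have h1 := (F.2.2 ⟨i + (a:ℕ), by omega⟩).2.1 (by simp) (by simp [a.isLt])
      have h2 := F.2.1 (show (⟨i + (a:ℕ), by omega⟩ : Fin (i+j+p)) < ⟨i + (b:ℕ), by omega⟩ from
        by rw [Fin.lt_def]; show i + (a:ℕ) < i + (b:ℕ); omega)
      rw [Fin.lt_def] at h2
      simp only at h2 ⊢
      omega⟩,
    ⟨fun a => ⟨(F.1 ⟨i + j + (a:ℕ), by omega⟩ : ℕ) - (k + ℓ), by
        have h1 := (F.2.2 ⟨i + j + (a:ℕ), by omega⟩).2.2 (by simp)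
        have h2 := (F.1 ⟨i + j + (a:ℕ), by omega⟩).isLt
        omega⟩, by
      intro a b hab
      rw [Fin.lt_def]
      have h1 := (F.2.2 ⟨i + j + (a:ℕ), by omega⟩).2.2 (by simp)
      have h2 := F.2.1 (show (⟨i + j + (a:ℕ), by omega⟩ : Fin (i+j+p)) <
          ⟨i + j + (b:ℕ), by omega⟩ from by
        rw [Fin.lt_def]; show i + j + (a:ℕ) < i + j + (b:ℕ); omega)
      rw [Fin.lt_def] at h2
      simp only at h2 ⊢
      omega⟩⟩

lemma toBlocks_apply (G) (a : Fin (i+j+p)) :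
    ((toBlocks (i := i) (j := j) (p := p) (k := k) (ℓ := ℓ) (m := m) G).1 a : ℕ) =
      glue G.1.1 G.2.1.1 G.2.2.1 a := rfl

lemma ofBlocks_1 (F) (a : Fin i) :
    ((ofBlocks (i := i) (j := j) (p := p) (k := k) (ℓ := ℓ) (m := m) F).1.1 a : ℕ) =
      F.1 ⟨(a:ℕ), by omega⟩ := rfl

lemma ofBlocks_2 (F) (a : Fin j) :
    ((ofBlocks (i := i) (j := j) (p := p) (k := k) (ℓ := ℓ) (m := m) F).2.1.1 a : ℕ) =
      (F.1 ⟨i + (a:ℕ), by omega⟩ : ℕ) - k := rfl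

lemma ofBlocks_3 (F) (a : Fin p) :
    ((ofBlocks (i := i) (j := j) (p := p) (k := k) (ℓ := ℓ) (m := m) F).2.2.1 a : ℕ) =
      (F.1 ⟨i + j + (a:ℕ), by omega⟩ : ℕ) - (k + ℓ) := rfl

lemma toBlocks_surjective :
    Function.Surjective (toBlocks (i := i) (j := j) (p := p) (k := k) (ℓ := ℓ) (m := m)) := by
  intro F
  refine ⟨ofBlocks F, ?_⟩
  apply Subtype.ext
  funext a
  apply Fin.ext
  rw [toBlocks_apply]
  rcases lt_or_ge ((a:ℕ)) i with h1 | h1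
  · rw [glue_lo h1, ofBlocks_1]
  · rcases lt_or_ge ((a:ℕ)) (i+j) with h2 | h2
    · rw [glue_mid h1 h2, ofBlocks_2]
      have he : (⟨i + ((⟨(a:ℕ) - i, by omega⟩ : Fin j) : ℕ), by omega⟩ : Fin (i+j+p)) = a :=
        Fin.ext (by show i + ((a:ℕ) - i) = (a:ℕ); omega)
      rw [he]
      have := (F.2.2 a).2.1 h1 h2
      omega
    · rw [glue_hi h2, ofBlocks_3]
      have he : (⟨i + j + ((⟨(a:ℕ) - i - j, by omega⟩ : Fin p) : ℕ), by omega⟩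
          : Fin (i+j+p)) = a := Fin.ext (by show i + j + ((a:ℕ) - i - j) = (a:ℕ); omega)
      rw [he]
      have := (F.2.2 a).2.2 h2
      omega


lemma card_strictMono (a b : ℕ) :
    Nat.card {g : Fin a → Fin b // StrictMono g} = b.choose a := by
  have e : {g : Fin a → Fin b // StrictMono g} ≃ {s : Finset (Fin b) // s.card = a} :=
    { toFun := fun g => ⟨Finset.univ.image g.1, by
        rw [Finset.card_image_of_injective _ g.2.injective, Finset.card_univ, Fintype.card_fin]⟩
      invFun := fun s => ⟨fun x => s.1.orderEmbOfFin s.2 x, (s.1.orderEmbOfFin s.2).strictMono⟩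
      left_inv := fun g => by
        apply Subtype.ext
        exact (Finset.orderEmbOfFin_unique _ (fun x => by simp) g.2).symm
      right_inv := fun s => by
        apply Subtype.ext
        apply Finset.coe_injective
        rw [Finset.coe_image, Finset.coe_univ, Set.image_univ]
        exact Finset.range_orderEmbOfFin s.1 s.2 }
  rw [Nat.card_congr e, Nat.card_eq_fintype_card, Fintype.card_finset_len, Fintype.card_fin]

theorem numOcc_piKLM (i j p k ℓ m : ℕ) (hi : 1 ≤ i) (hj : 1 ≤ j) (hk : 1 ≤ k) (hl : 1 ≤ ℓ) :
    numOcc (piKLM i j p) (piKLM k ℓ m) = k.choose i * ℓ.choose j * m.choose p := by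
  rw [numOcc,
    Nat.card_congr (Equiv.subtypeEquivRight (fun f => isOcc_iff hi hj hk hl f)),
    Nat.card_congr (Equiv.ofBijective _ ⟨toBlocks_injective, toBlocks_surjective⟩).symm,
    Nat.card_prod, Nat.card_prod, card_strictMono, card_strictMono, card_strictMono]
  ring
end
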